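/- Let μ be a probability measure on a measurable space X, and let σ : ℝ → ℝ be Lipschitz with constant L ≥ 0 and bounded by B ≥ 0. For each layer l = 1, …, N, let f_l : X → ℝ be μ-integrable and let g_l : X → ℝ be measurable with |g_l(x)| ≤ C for μ-almost every x (C ≥ 0). Let w, v ∈ ℝ with |w| ≤ C_w. Then the total connectivity difference over all layers satisfies Σ_{l=1}^{N} |Δ(f_l, w) − Δ(g_l, v)| ≤ (B + C·L·C_w)·Σ_{l=1}^{N} ∫ |f_l(x) − g_l(x)| dμ(x) + N·C²·L·|w − v|. -/

import Mathlib

open MeasureTheory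

/-- Layerwise bound. -/
lemma layerwise_connectivity_bound
    {X : Type*} [MeasurableSpace X] (μ : Measure X) [IsProbabilityMeasure μ]
    (σ : ℝ → ℝ) (L B C Cw w v : ℝ)
    (hL : 0 ≤ L) (hB : 0 ≤ B) (hC : 0 ≤ C)
    (hLip : ∀ x y : ℝ, |σ x - σ y| ≤ L * |x - y|)
    (hBd : ∀ x : ℝ, |σ x| ≤ B)
    (f g : X → ℝ)
    (hf : Integrable f μ)
    (hgm : Measurable g)
    (hg : ∀ᵐ x ∂μ, |g x| ≤ C)
    (hw : |w| ≤ Cw) :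
    |(∫ x, f x * σ (w * f x) ∂μ) - ∫ x, g x * σ (v * g x) ∂μ| ≤
      (B + C * L * Cw) * (∫ x, |f x - g x| ∂μ) + C ^ 2 * L * |w - v| := by
  have hσcont : Continuous σ :=
    (LipschitzWith.of_dist_le_mul (K := Real.toNNReal L) (fun x y => by
      rw [Real.dist_eq, Real.dist_eq, Real.coe_toNNReal L hL]; exact hLip x y)).continuous
  -- integrability of g
  have hgint : Integrable g μ := by
    refine (integrable_const C).mono' hgm.aestronglyMeasurable ?_
    filter_upwards [hg] with x hx
    simpa [Real.norm_eq_abs] using hx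
  have h1 : Integrable (fun x => f x * σ (w * f x)) μ := by
    refine hf.bdd_mul (c := B) ?_ (ae_of_all _ fun x => by simpa [Real.norm_eq_abs] using hBd (w * f x)) |>.congr ?_
    · exact hσcont.comp_aestronglyMeasurable (hf.aestronglyMeasurable.const_mul w)
    · filter_upwards with x; ring
  have h2 : Integrable (fun x => g x * σ (v * g x)) μ := by
    refine (integrable_const (C * B)).mono'
      (hgm.aestronglyMeasurable.mul
        (hσcont.comp_aestronglyMeasurable (hgm.aestronglyMeasurable.const_mul v))) ?_
    filter_upwards [hg] with x hx
    rw [Real.norm_eq_abs, abs_mul]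
    exact mul_le_mul hx (hBd _) (abs_nonneg _) hC
  have hCw : 0 ≤ Cw := (abs_nonneg w).trans hw
  have hfg : Integrable (fun x => |f x - g x|) μ := (hf.sub hgint).abs
  have key : (∫ x, |f x * σ (w * f x) - g x * σ (v * g x)| ∂μ) ≤
      ∫ x, ((B + C * L * Cw) * |f x - g x| + C ^ 2 * L * |w - v|) ∂μ := by
    refine integral_mono_ae (h1.sub h2).abs ((hfg.const_mul _).add (integrable_const _)) ?_
    filter_upwards [hg] with x hx
    have e1 : f x * σ (w * f x) - g x * σ (v * g x) =
        (f x - g x) * σ (w * f x) + g x * (σ (w * f x) - σ (w * g x))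
        + g x * (σ (w * g x) - σ (v * g x)) := by ring
    have b1 : |(f x - g x) * σ (w * f x)| ≤ B * |f x - g x| := by
      rw [abs_mul]
      calc |f x - g x| * |σ (w * f x)| ≤ |f x - g x| * B :=
            mul_le_mul_of_nonneg_left (hBd _) (abs_nonneg _)
        _ = B * |f x - g x| := mul_comm _ _
    have b2 : |g x * (σ (w * f x) - σ (w * g x))| ≤ C * (L * (Cw * |f x - g x|)) := by
      rw [abs_mul]
      have h3 : |σ (w * f x) - σ (w * g x)| ≤ L * (|w| * |f x - g x|) := by
        calc |σ (w * f x) - σ (w * g x)| ≤ L * |w * f x - w * g x| := hLip _ _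
          _ = L * (|w| * |f x - g x|) := by rw [← mul_sub, abs_mul]
      calc |g x| * |σ (w * f x) - σ (w * g x)| ≤ C * (L * (|w| * |f x - g x|)) :=
            mul_le_mul hx h3 (abs_nonneg _) hC
        _ ≤ C * (L * (Cw * |f x - g x|)) := by
            apply mul_le_mul_of_nonneg_left _ hC
            apply mul_le_mul_of_nonneg_left _ hL
            exact mul_le_mul_of_nonneg_right hw (abs_nonneg _)
    have b3 : |g x * (σ (w * g x) - σ (v * g x))| ≤ C ^ 2 * L * |w - v| := by
      rw [abs_mul]
      have h3 : |σ (w * g x) - σ (v * g x)| ≤ L * (|w - v| * |g x|) := by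
        calc |σ (w * g x) - σ (v * g x)| ≤ L * |w * g x - v * g x| := hLip _ _
          _ = L * (|w - v| * |g x|) := by rw [← sub_mul, abs_mul]
      calc |g x| * |σ (w * g x) - σ (v * g x)| ≤ C * (L * (|w - v| * C)) :=
            mul_le_mul hx (h3.trans (by
              apply mul_le_mul_of_nonneg_left _ hL
              exact mul_le_mul_of_nonneg_left hx (abs_nonneg _))) (abs_nonneg _) hC
        _ = C ^ 2 * L * |w - v| := by ring
    calc |f x * σ (w * f x) - g x * σ (v * g x)|
        ≤ |(f x - g x) * σ (w * f x)| + |g x * (σ (w * f x) - σ (w * g x))|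
          + |g x * (σ (w * g x) - σ (v * g x))| := by
          rw [e1]; exact (abs_add_le _ _).trans (by gcongr; exact abs_add_le _ _)
      _ ≤ B * |f x - g x| + C * (L * (Cw * |f x - g x|)) + C ^ 2 * L * |w - v| := by
          gcongr
      _ = (B + C * L * Cw) * |f x - g x| + C ^ 2 * L * |w - v| := by ring
  calc |(∫ x, f x * σ (w * f x) ∂μ) - ∫ x, g x * σ (v * g x) ∂μ|
      = |∫ x, (f x * σ (w * f x) - g x * σ (v * g x)) ∂μ| := by
        rw [integral_sub h1 h2]
    _ ≤ ∫ x, |f x * σ (w * f x) - g x * σ (v * g x)| ∂μ := by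
        simpa [Real.norm_eq_abs] using norm_integral_le_integral_norm
          (fun x => f x * σ (w * f x) - g x * σ (v * g x))
    _ ≤ ∫ x, ((B + C * L * Cw) * |f x - g x| + C ^ 2 * L * |w - v|) ∂μ := key
    _ = (B + C * L * Cw) * (∫ x, |f x - g x| ∂μ) + C ^ 2 * L * |w - v| := by
        rw [integral_add (hfg.const_mul _) (integrable_const _), integral_const_mul,
          integral_const, probReal_univ]
        simp

/-- Summing the layerwise connectivity-difference bound over the
layers `l = 1, …, N`:
`Σ_l |Δ(f_l, w) − Δ(g_l, v)| ≤ (B + C·L·C_w)·Σ_l ∫ |f_l − g_l| dμ + N·C²·L·|w − v|`. -/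
theorem total_connectivity_difference_bound
    {X : Type*} [MeasurableSpace X] (μ : Measure X) [IsProbabilityMeasure μ]
    (σ : ℝ → ℝ) (L B C Cw w v : ℝ) (N : ℕ)
    (hL : 0 ≤ L) (hB : 0 ≤ B) (hC : 0 ≤ C)
    (hLip : ∀ x y : ℝ, |σ x - σ y| ≤ L * |x - y|)
    (hBd : ∀ x : ℝ, |σ x| ≤ B)
    (f g : Fin N → X → ℝ)
    (hf : ∀ l, Integrable (f l) μ)
    (hgm : ∀ l, Measurable (g l))
    (hg : ∀ l, ∀ᵐ x ∂μ, |g l x| ≤ C)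
    (hw : |w| ≤ Cw) :
    ∑ l : Fin N, |(∫ x, f l x * σ (w * f l x) ∂μ) - ∫ x, g l x * σ (v * g l x) ∂μ| ≤
      (B + C * L * Cw) * (∑ l : Fin N, ∫ x, |f l x - g l x| ∂μ) +
        (N : ℝ) * C ^ 2 * L * |w - v| := by
  calc ∑ l : Fin N, |(∫ x, f l x * σ (w * f l x) ∂μ) - ∫ x, g l x * σ (v * g l x) ∂μ|
      ≤ ∑ l : Fin N, ((B + C * L * Cw) * (∫ x, |f l x - g l x| ∂μ) + C ^ 2 * L * |w - v|) :=
        Finset.sum_le_sum fun l _ =>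
          layerwise_connectivity_bound μ σ L B C Cw w v hL hB hC hLip hBd
            (f l) (g l) (hf l) (hgm l) (hg l) hw
    _ = (B + C * L * Cw) * (∑ l : Fin N, ∫ x, |f l x - g l x| ∂μ) +
        (N : ℝ) * C ^ 2 * L * |w - v| := by
        rw [Finset.sum_add_distrib, ← Finset.mul_sum, Finset.sum_const, Finset.card_univ,
          Fintype.card_fin, nsmul_eq_mul]
        ring
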